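/- arXiv:1105.3641 — 3 statements merged into one kernel-verified Lean document; each statement's English description precedes it below -/
import Mathlib

section
/- Let S_λ be a weighted shift on a directed tree T with weights λ = {λ_v}_{v∈V°}, and let u₀, u₁ ∈ V satisfy Chi(u₀) = {u₁}. Suppose e_{u₀} ∈ D^∞(S_λ), {‖S_λ^n e_{u₀}‖²}_{n=0}^∞ is a Stieltjes moment sequence, and λ_{u₁} ≠ 0. Then e_{u₁} ∈ D^∞(S_λ) and {‖S_λ^n e_{u₁}‖²}_{n=0}^∞ is a Stieltjes moment sequence. Moreover: (i) the mapping μ ↦ ρ_μ, where ρ_μ(σ) = |λ_{u₁}|² ∫_σ (1/s) dμ(s) + (1 − |λ_{u₁}|² ∫_{[0,∞)} (1/s) dμ(s)) δ₀(σ), is a bijection from the set of representing measures μ of {‖S_λ^n e_{u₁}‖²}_{n=0}^∞ with ∫_{[0,∞)} (1/s) dμ(s) ≤ 1/|λ_{u₁}|² onto the set of all representing measures of {‖S_λ^n e_{u₀}‖²}_{n=0}^∞, with inverse ρ ↦ μ_ρ given by μ_ρ(σ) = (1/|λ_{u₁}|²) ∫_σ s dρ(s); (ii) if {‖S_λ^n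 e_{u₁}‖²}_{n=0}^∞ is determinate, then so are {‖S_λ^{n+1} e_{u₀}‖²}_{n=0}^∞ and {‖S_λ^n e_{u₀}‖²}_{n=0}^∞. -/
open MeasureTheory ENNReal
open scoped NNReal
noncomputable section

/-- `μ` is a representing measure of the sequence `t`. -/
def IsRepMeasure (μ : Measure ℝ≥0) (t : ℕ → ℝ) : Prop :=
  ∀ n : ℕ, Integrable (fun s : ℝ≥0 => (s : ℝ) ^ n) μ ∧ t n = ∫ s, (s : ℝ) ^ n ∂μ

/-- `t` is a Stieltjes moment sequence. -/
def IsStieltjesMoment (t : ℕ → ℝ) : Prop := ∃ μ : Measure ℝ≥0, IsRepMeasure μ t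

/-- `t` is a determinate Stieltjes moment sequence. -/
def IsDetStieltjesMoment (t : ℕ → ℝ) : Prop := ∃! μ : Measure ℝ≥0, IsRepMeasure μ t

section Operators

universe u
variable {H : Type u} [NormedAddCommGroup H] [InnerProductSpace ℂ H]

/-- The maximal domain of the composition `S ∘ T`. -/
def compDomain (S T : H →ₗ.[ℂ] H) : Submodule ℂ H where
  carrier := {x | ∃ hx : x ∈ T.domain, T ⟨x, hx⟩ ∈ S.domain}
  zero_mem' := ⟨T.domain.zero_mem, by
    have h0 : (⟨0, T.domain.zero_mem⟩ : T.domain) = 0 := rfl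
    rw [h0, LinearPMap.map_zero]; exact S.domain.zero_mem⟩
  add_mem' := by
    rintro x y ⟨hx, hx'⟩ ⟨hy, hy'⟩
    refine ⟨T.domain.add_mem hx hy, ?_⟩
    have : (⟨x + y, T.domain.add_mem hx hy⟩ : T.domain) = ⟨x, hx⟩ + ⟨y, hy⟩ := rfl
    rw [this, LinearPMap.map_add]
    exact S.domain.add_mem hx' hy'
  smul_mem' := by
    rintro c x ⟨hx, hx'⟩
    refine ⟨T.domain.smul_mem c hx, ?_⟩
    have : (⟨c • x, T.domain.smul_mem c hx⟩ : T.domain) = c • (⟨x, hx⟩ : T.domain) := rfl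
    rw [this, LinearPMap.map_smul]
    exact S.domain.smul_mem c hx'

/-- Composition `S ∘ T` of partial operators, on the maximal domain. -/
def pmapComp (S T : H →ₗ.[ℂ] H) : H →ₗ.[ℂ] H :=
  S.comp (T.domRestrict (compDomain S T)) (by
    rintro ⟨x, hx⟩
    have hxT : x ∈ T.domain := (Submodule.mem_inf.mp hx).2
    have hxD : x ∈ compDomain S T := (Submodule.mem_inf.mp hx).1
    show T ⟨x, hxT⟩ ∈ S.domain
    exact hxD.choose_spec)

/-- Powers of a partial operator: `pmapPow S n = Sⁿ` with its natural domain. -/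
def pmapPow (S : H →ₗ.[ℂ] H) : ℕ → (H →ₗ.[ℂ] H)
  | 0 => LinearMap.id.toPMap ⊤
  | n + 1 => pmapComp (pmapPow S n) S

open Classical in
/-- Total (junk-valued) application of the power `Sⁿ`. -/
def powApp (S : H →ₗ.[ℂ] H) (n : ℕ) (x : H) : H :=
  if h : x ∈ (pmapPow S n).domain then (pmapPow S n) ⟨x, h⟩ else 0

/-- The set of `C^∞`-vectors of `S`. -/
def Dinf (S : H →ₗ.[ℂ] H) : Set H := {x | ∀ n : ℕ, x ∈ (pmapPow S n).domain}

/-- `F` is a core of `S`. -/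
def IsCore (S : H →ₗ.[ℂ] H) (F : Submodule ℂ H) : Prop :=
  F ≤ S.domain ∧ (S.graph : Set (H × H)) ⊆ closure ((S.domRestrict F).graph : Set (H × H))

end Operators
section Operators
universe u
variable {H : Type u} [NormedAddCommGroup H] [InnerProductSpace ℂ H]

/-- A normal (unbounded) operator: closed, densely defined, with `D(N*) = D(N)` and
`‖N* x‖ = ‖N x‖` on the common domain. -/
def IsNormalOp [CompleteSpace H] (N : H →ₗ.[ℂ] H) : Prop :=
  Dense (N.domain : Set H) ∧ N.IsClosed ∧ N.adjoint.domain = N.domain ∧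
    ∀ (x : H) (hx : x ∈ N.domain) (hx' : x ∈ N.adjoint.domain),
      ‖N.adjoint ⟨x, hx'⟩‖ = ‖N ⟨x, hx⟩‖

/-- A subnormal operator: densely defined with a normal extension in a possibly
larger Hilbert space. -/
def IsSubnormal {H : Type u} [NormedAddCommGroup H] [InnerProductSpace ℂ H]
    (S : H →ₗ.[ℂ] H) : Prop :=
  Dense (S.domain : Set H) ∧
  ∃ (K : Type u) (_ : NormedAddCommGroup K) (_ : InnerProductSpace ℂ K) (_ : CompleteSpace K)
    (J : H →ₗᵢ[ℂ] K) (N : K →ₗ.[ℂ] K), IsNormalOp N ∧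
      ∀ x : S.domain, ∃ hx : J x ∈ N.domain, N ⟨J x, hx⟩ = J (S x)

/-- A hyponormal operator. -/
def IsHyponormal [CompleteSpace H] (S : H →ₗ.[ℂ] H) : Prop :=
  Dense (S.domain : Set H) ∧
  ∀ (x : H) (hx : x ∈ S.domain), ∃ hx' : x ∈ S.adjoint.domain,
      ‖S.adjoint ⟨x, hx'⟩‖ ≤ ‖S ⟨x, hx⟩‖

end Operators

/-- A directed tree on the vertex set `V`: a connected directed graph without circuits
in which every non-root vertex has a unique parent. -/
structure DirectedTree (V : Type*) where
  edge : V → V → Prop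
  connected : ∀ u v : V, Relation.ReflTransGen (fun a b => edge a b ∨ edge b a) u v
  no_circuits : ∀ v : V, ¬ Relation.TransGen edge v v
  parent_unique : ∀ u v w : V, edge v u → edge w u → v = w

namespace DirectedTree

variable {V : Type*}

/-- The roots: vertices with no incoming edge. -/
def isRoot (T : DirectedTree V) (v : V) : Prop := ¬ ∃ u : V, T.edge u v

/-- `V°`: the non-root vertices, i.e. vertices having a parent. -/
def nonRoot (T : DirectedTree V) (v : V) : Prop := ∃ u : V, T.edge u v

open Classical in
/-- The parent function (with junk value at roots). -/
def par (T : DirectedTree V) (v : V) : V := if h : ∃ u : V, T.edge u v then h.choose else v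

/-- The set of children of a vertex. -/
def chi (T : DirectedTree V) (u : V) : Set V := {v | T.edge u v}

/-- Iterated children `Chi^n(u)`. -/
def chiN (T : DirectedTree V) : ℕ → V → Set V
  | 0, u => {u}
  | n + 1, u => ⋃ w ∈ T.chiN n u, T.chi w

/-- The descendants of `u`. -/
def des (T : DirectedTree V) (u : V) : Set V := ⋃ n : ℕ, T.chiN n u

/-- `T` is leafless: every vertex has a child. -/
def Leafless (T : DirectedTree V) : Prop := ∀ u : V, ∃ v : V, T.edge u v

/-- The product `λ_{u∣v} = ∏_{j=0}^{n-1} λ_{par^j(v)}` of the weights along the path of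
length `n` ending at `v` (for `v ∈ Chi^n(u)` this is the usual `λ_{u∣v}`). -/
def pathProd (T : DirectedTree V) (lam : V → ℂ) (n : ℕ) (v : V) : ℂ :=
  ∏ j ∈ Finset.range n, lam (T.par^[j] v)

open Classical in
/-- The formal weighted-shift transformation `Λ_T` on families of complex numbers. -/
def lamMap (T : DirectedTree V) (lam : V → ℂ) (f : V → ℂ) : V → ℂ :=
  fun v => if T.nonRoot v then lam v * f (T.par v) else 0

variable (T : DirectedTree V)

theorem lamMap_add (lam : V → ℂ) (f g : V → ℂ) :
    T.lamMap lam (f + g) = T.lamMap lam f + T.lamMap lam g := by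
  funext v; simp only [lamMap, Pi.add_apply]; split <;> ring

theorem lamMap_smul (lam : V → ℂ) (c : ℂ) (f : V → ℂ) :
    T.lamMap lam (c • f) = c • T.lamMap lam f := by
  funext v; simp only [lamMap, Pi.smul_apply, smul_eq_mul]; split <;> ring

theorem lamMap_zero (lam : V → ℂ) : T.lamMap lam (0 : V → ℂ) = 0 := by
  funext v; simp [lamMap]

/-- The domain of the weighted shift `S_λ`. -/
def shiftDomain (lam : V → ℂ) : Submodule ℂ (lp (fun _ : V => ℂ) 2) where
  carrier := {f | Memℓp (T.lamMap lam f) 2}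
  zero_mem' := by
    rw [Set.mem_setOf_eq, lp.coeFn_zero, lamMap_zero]
    exact zero_memℓp
  add_mem' := by
    intro f g hf hg
    rw [Set.mem_setOf_eq, lp.coeFn_add, lamMap_add]
    exact hf.add hg
  smul_mem' := by
    intro c f hf
    rw [Set.mem_setOf_eq, lp.coeFn_smul, lamMap_smul]
    exact hf.const_smul c

/-- The weighted shift `S_λ` on the directed tree `T`, as a partial operator in `ℓ²(V)`. -/
def shift (lam : V → ℂ) : lp (fun _ : V => ℂ) 2 →ₗ.[ℂ] lp (fun _ : V => ℂ) 2 where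
  domain := T.shiftDomain lam
  toFun :=
    { toFun := fun f => (⟨T.lamMap lam f, f.2⟩ : lp (fun _ : V => ℂ) 2)
      map_add' := by
        rintro f g
        apply lp.ext
        rw [lp.coeFn_add]
        show T.lamMap lam
            ((((f : lp (fun _ : V => ℂ) 2) : V → ℂ)) + (((g : lp (fun _ : V => ℂ) 2) : V → ℂ)))
          = T.lamMap lam ((f : lp (fun _ : V => ℂ) 2) : V → ℂ)
            + T.lamMap lam ((g : lp (fun _ : V => ℂ) 2) : V → ℂ)
        exact T.lamMap_add lam _ _
      map_smul' := by
        rintro c f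
        apply lp.ext
        rw [lp.coeFn_smul]
        show T.lamMap lam (c • (((f : lp (fun _ : V => ℂ) 2) : V → ℂ)))
          = c • T.lamMap lam ((f : lp (fun _ : V => ℂ) 2) : V → ℂ)
        exact T.lamMap_smul lam c _ }

end DirectedTree

open Classical in
/-- The basis vector `e_u` of `ℓ²(V)`. -/
def eVec {V : Type*} (u : V) : lp (fun _ : V => ℂ) 2 := lp.single 2 u 1

section MoreDefs
universe u
variable {H : Type u} [NormedAddCommGroup H] [InnerProductSpace ℂ H]

/-- The inner product, linear in the FIRST argument (the paper's convention). -/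
def innerPaper (x y : H) : ℂ := inner ℂ y x

/-- The moment sequence `n ↦ ‖Sⁿ f‖²` generated by the vector `f`. -/
def momentSeq (S : H →ₗ.[ℂ] H) (f : H) : ℕ → ℝ := fun n => ‖powApp S n f‖ ^ 2

/-- `f` is a quasi-analytic vector of `S` : `f ∈ D^∞(S)` and
`∑ₙ ‖Sⁿ f‖^{-1/n} = ∞` (with `1/0 = ∞`). -/
def IsQuasiAnalyticVec (S : H →ₗ.[ℂ] H) (f : H) : Prop :=
  (∀ n : ℕ, f ∈ (pmapPow S n).domain) ∧
  ∑' n : ℕ, ((‖powApp S (n + 1) f‖₊ ^ ((1 : ℝ) / (n + 1)) : ℝ≥0) : ℝ≥0∞)⁻¹ = ∞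

end MoreDefs

/-- The consistency condition `μ_u(σ) = ∑_{v ∈ Chi(u)} |λ_v|² ∫_σ (1/s) dμ_v(s) + ε_u δ₀(σ)`
at the vertex `u` (with the convention `1/0 = ∞`). -/
def consistentAt {V : Type*} (T : DirectedTree V) (lam : V → ℂ) (μ : V → MeasureTheory.Measure ℝ≥0)
    (ε : V → ℝ≥0) (u : V) : Prop :=
  ∀ σ : Set ℝ≥0, MeasurableSet σ →
    μ u σ = (∑' v : {v : V // T.edge u v},
        (‖lam (v : V)‖₊ : ℝ≥0∞) ^ 2 * ∫⁻ s in σ, ((s : ℝ≥0∞))⁻¹ ∂(μ (v : V)))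
      + (ε u : ℝ≥0∞) * MeasureTheory.Measure.dirac (0 : ℝ≥0) σ

/-- The sequence `{ϑ, t₀, t₁, t₂, …}` obtained by prepending `ϑ` to `t`. -/
def shiftedSeq (ϑ : ℝ) (t : ℕ → ℝ) : ℕ → ℝ := fun n => match n with
  | 0 => ϑ
  | n + 1 => t n

/-- A positive definite sequence of real numbers. -/
def IsPosDefSeq (t : ℕ → ℝ) : Prop :=
  ∀ (n : ℕ) (α : ℕ → ℂ),
    0 ≤ (∑ k ∈ Finset.range (n + 1), ∑ l ∈ Finset.range (n + 1),
        (t (k + l) : ℂ) * α k * (starRingEnd ℂ) (α l)).re ∧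
    (∑ k ∈ Finset.range (n + 1), ∑ l ∈ Finset.range (n + 1),
        (t (k + l) : ℂ) * α k * (starRingEnd ℂ) (α l)).im = 0


/-- The map `μ ↦ ρ_μ` of Lemma (charsub-1), with `c = |λ_{u₁}|²`. -/
def rhoMap (c : ℝ≥0∞) (μ : Measure ℝ≥0) : Measure ℝ≥0 :=
  c • μ.withDensity (fun s => ((s : ℝ≥0∞))⁻¹)
    + (1 - c * ∫⁻ s, ((s : ℝ≥0∞))⁻¹ ∂μ) • Measure.dirac (0 : ℝ≥0)

/-- The map `ρ ↦ μ_ρ` of Lemma (charsub-1), with `c = |λ_{u₁}|²`. -/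
def muOfRho (c : ℝ≥0∞) (ρ : Measure ℝ≥0) : Measure ℝ≥0 :=
  c⁻¹ • ρ.withDensity fun s => (s : ℝ≥0∞)

-- basic measurability
lemma meas_coe : Measurable (fun s : ℝ≥0 => (s : ℝ≥0∞)) := measurable_coe_nnreal_ennreal
lemma meas_inv : Measurable (fun s : ℝ≥0 => ((s : ℝ≥0∞))⁻¹) := meas_coe.inv

lemma coe_mul_inv : (fun s : ℝ≥0 => (s : ℝ≥0∞)) * (fun s : ℝ≥0 => ((s : ℝ≥0∞))⁻¹)
    = Set.indicator ({0}ᶜ : Set ℝ≥0) 1 := by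
  funext s
  by_cases hs : s = 0
  · subst hs; simp
  · simp only [Pi.mul_apply, Set.indicator_of_mem (by simpa using hs : (s:ℝ≥0) ∈ ({0}ᶜ : Set ℝ≥0))]
    rw [ENNReal.mul_inv_cancel (by exact_mod_cast hs) coe_ne_top]
    rfl

lemma inv_mul_coe : (fun s : ℝ≥0 => ((s : ℝ≥0∞))⁻¹) * (fun s : ℝ≥0 => ((s : ℝ≥0∞)))
    = Set.indicator ({0}ᶜ : Set ℝ≥0) 1 := by
  rw [mul_comm]; exact coe_mul_inv

-- representing measures are probability measures (when t 0 = 1)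
lemma rep_univ {ρ : Measure ℝ≥0} {t : ℕ → ℝ} (h : IsRepMeasure ρ t) (h0 : t 0 = 1) :
    ρ Set.univ = 1 := by
  obtain ⟨hint, hval⟩ := h 0
  simp only [pow_zero] at hint hval
  have hfin : ρ Set.univ < ⊤ := ((integrable_const_iff.mp hint).resolve_left (by norm_num)).measure_univ_lt_top
  have : (ρ Set.univ).toReal = 1 := by
    rw [h0] at hval; rw [hval, integral_const, smul_eq_mul, mul_one]; rfl
  exact (ENNReal.toReal_eq_one_iff _).mp this

section Abstract
variable {c : ℝ≥0∞} {t₀ t₁ : ℕ → ℝ}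


lemma smul_pow_eq (n : ℕ) : (fun s : ℝ≥0 => s • ((s:ℝ))^n) = fun s : ℝ≥0 => (s:ℝ)^(n+1) := by
  funext s
  rw [NNReal.smul_def, smul_eq_mul, pow_succ, mul_comm]

/-- M1 -/
lemma muOfRho_rep (hc0 : c ≠ 0) (hctop : c ≠ ⊤)
    (hrel : ∀ n, t₀ (n+1) = c.toReal * t₁ n) {ρ : Measure ℝ≥0} (hρ : IsRepMeasure ρ t₀) :
    IsRepMeasure (muOfRho c ρ) t₁ := by
  have hcr : c.toReal ≠ 0 := ENNReal.toReal_ne_zero.mpr ⟨hc0, hctop⟩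
  intro n
  obtain ⟨hint1, hval1⟩ := hρ (n+1)
  have hsm : Integrable (fun s : ℝ≥0 => s • ((s:ℝ))^n) ρ := by rw [smul_pow_eq]; exact hint1
  have hw : Integrable (fun s : ℝ≥0 => (s:ℝ)^n) (ρ.withDensity fun s => (s:ℝ≥0∞)) :=
    (integrable_withDensity_iff_integrable_smul measurable_id).mpr hsm
  refine ⟨hw.smul_measure (ENNReal.inv_ne_top.mpr hc0), ?_⟩
  rw [muOfRho, integral_smul_measure, integral_withDensity_eq_integral_smul (f := fun s : ℝ≥0 => s) measurable_id]
  rw [show ∫ s, s • ((s:ℝ))^n ∂ρ = ∫ s, ((s:ℝ))^(n+1) ∂ρ by rw [smul_pow_eq]]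
  rw [← hval1, hrel n, ENNReal.toReal_inv, smul_eq_mul, inv_mul_cancel_left₀ hcr]

lemma lint_inv_muOfRho (ρ : Measure ℝ≥0) :
    ∫⁻ s, ((s:ℝ≥0∞))⁻¹ ∂(muOfRho c ρ) = c⁻¹ * ρ ({0}ᶜ : Set ℝ≥0) := by
  rw [muOfRho, lintegral_smul_measure,
    lintegral_withDensity_eq_lintegral_mul ρ meas_coe meas_inv, coe_mul_inv,
    lintegral_indicator_one (measurableSet_singleton (0:ℝ≥0)).compl, smul_eq_mul]

/-- M2 -/
lemma muOfRho_I_le {ρ : Measure ℝ≥0} (hρu : ρ Set.univ = 1) :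
    ∫⁻ s, ((s:ℝ≥0∞))⁻¹ ∂(muOfRho c ρ) ≤ c⁻¹ := by
  rw [lint_inv_muOfRho]
  calc c⁻¹ * ρ ({0}ᶜ : Set ℝ≥0) ≤ c⁻¹ * ρ Set.univ :=
        mul_le_mul_right (measure_mono (Set.subset_univ _)) _
    _ = c⁻¹ := by rw [hρu, mul_one]

lemma smul_dirac_eq_restrict (ρ : Measure ℝ≥0) :
    ρ ({0} : Set ℝ≥0) • Measure.dirac (0:ℝ≥0) = ρ.restrict ({0} : Set ℝ≥0) := by
  ext σ hσ
  rw [Measure.smul_apply, Measure.restrict_apply hσ, Measure.dirac_apply' _ hσ, smul_eq_mul]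
  by_cases h : (0:ℝ≥0) ∈ σ
  · rw [Set.indicator_of_mem h, Pi.one_apply, mul_one,
      Set.inter_eq_right.mpr (Set.singleton_subset_iff.mpr h)]
  · rw [Set.indicator_of_notMem h, mul_zero,
      Set.inter_singleton_eq_empty.mpr h, measure_empty]

/-- M3 -/
lemma rhoMap_muOfRho (hc0 : c ≠ 0) (hctop : c ≠ ⊤) {ρ : Measure ℝ≥0} (hρu : ρ Set.univ = 1) :
    rhoMap c (muOfRho c ρ) = ρ := by
  have h1 : (muOfRho c ρ).withDensity (fun s : ℝ≥0 => ((s:ℝ≥0∞))⁻¹)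
      = c⁻¹ • ρ.restrict ({0}ᶜ : Set ℝ≥0) := by
    rw [muOfRho, withDensity_smul_measure, ← withDensity_mul ρ meas_coe meas_inv, coe_mul_inv,
      withDensity_indicator_one (measurableSet_singleton (0:ℝ≥0)).compl]
  have hcompl : ρ ({0}ᶜ : Set ℝ≥0) ≠ ⊤ := by
    refine ne_top_of_le_ne_top ?_ (measure_mono (Set.subset_univ _))
    rw [hρu]; exact one_ne_top
  rw [rhoMap, h1, lint_inv_muOfRho, smul_smul, ← mul_assoc,
    ENNReal.mul_inv_cancel hc0 hctop, one_mul, one_smul]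
  have h2 : (1:ℝ≥0∞) - ρ ({0}ᶜ : Set ℝ≥0) = ρ ({0} : Set ℝ≥0) := by
    conv_lhs => rw [← hρu, ← measure_add_measure_compl (measurableSet_singleton (0:ℝ≥0))]
    exact ENNReal.add_sub_cancel_right hcompl
  rw [h2, smul_dirac_eq_restrict, add_comm, Measure.restrict_add_restrict_compl
    (measurableSet_singleton (0:ℝ≥0))]

lemma mu0_null (hc0 : c ≠ 0) {μ : Measure ℝ≥0}
    (hI : ∫⁻ s, ((s:ℝ≥0∞))⁻¹ ∂μ ≤ c⁻¹) : μ ({0} : Set ℝ≥0) = 0 := by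
  by_contra h
  have h1 : (⊤:ℝ≥0∞) ≤ ∫⁻ s, ((s:ℝ≥0∞))⁻¹ ∂μ := by
    calc (⊤:ℝ≥0∞) = ⊤ * μ ({0} : Set ℝ≥0) := (ENNReal.top_mul h).symm
      _ = ∫⁻ s in ({0} : Set ℝ≥0), ((s:ℝ≥0∞))⁻¹ ∂μ := by
          rw [lintegral_singleton (fun s : ℝ≥0 => ((s:ℝ≥0∞))⁻¹) 0]
          simp
      _ ≤ _ := setLIntegral_le_lintegral _ _
  have h2 : c⁻¹ < ⊤ := ENNReal.inv_lt_top.mpr (pos_iff_ne_zero.mpr hc0)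
  exact absurd (le_trans h1 hI) (not_le.mpr h2)

lemma withDensity_inv_eq {μ : Measure ℝ≥0} (hμ0 : μ ({0} : Set ℝ≥0) = 0) :
    μ.withDensity (fun s : ℝ≥0 => ((s:ℝ≥0∞))⁻¹)
      = μ.withDensity (fun s : ℝ≥0 => ((s⁻¹ : ℝ≥0) : ℝ≥0∞)) := by
  refine withDensity_congr_ae ?_
  refine measure_mono_null (fun s hs => ?_) hμ0
  simp only [Set.mem_setOf_eq, Set.mem_singleton_iff] at hs ⊢
  by_contra hne
  exact hs ((ENNReal.coe_inv hne).symm)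

lemma ae_inv_smul_pow {μ : Measure ℝ≥0} (hμ0 : μ ({0} : Set ℝ≥0) = 0) (n : ℕ) :
    (fun s : ℝ≥0 => (s⁻¹ : ℝ≥0) • ((s:ℝ))^(n+1)) =ᵐ[μ] fun s : ℝ≥0 => ((s:ℝ))^n := by
  refine measure_mono_null (fun s hs => ?_) hμ0
  simp only [Set.mem_setOf_eq, Set.mem_singleton_iff] at hs ⊢
  by_contra hne
  refine hs ?_
  show (s⁻¹ : ℝ≥0) • ((s:ℝ))^(n+1) = ((s:ℝ))^n
  rw [NNReal.smul_def, smul_eq_mul, NNReal.coe_inv, pow_succ']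
  rw [inv_mul_cancel_left₀ (by exact_mod_cast hne)]

lemma integrable_pow_dirac (k : ℕ) :
    Integrable (fun s : ℝ≥0 => ((s:ℝ))^k) (Measure.dirac (0:ℝ≥0)) := by
  constructor
  · exact (by measurability : Measurable fun s : ℝ≥0 => ((s:ℝ))^k).aestronglyMeasurable
  · rw [HasFiniteIntegral, lintegral_dirac]
    exact ENNReal.coe_lt_top

/-- M4 -/
lemma rhoMap_rep (hc0 : c ≠ 0) (hctop : c ≠ ⊤) (h00 : t₀ 0 = 1)
    (hrel : ∀ n, t₀ (n+1) = c.toReal * t₁ n) {μ : Measure ℝ≥0} (hμ : IsRepMeasure μ t₁)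
    (hI : ∫⁻ s, ((s:ℝ≥0∞))⁻¹ ∂μ ≤ c⁻¹) : IsRepMeasure (rhoMap c μ) t₀ := by
  have hμ0 := mu0_null hc0 hI
  have hcI : c * ∫⁻ s, ((s:ℝ≥0∞))⁻¹ ∂μ ≤ 1 := by
    calc c * ∫⁻ s, ((s:ℝ≥0∞))⁻¹ ∂μ ≤ c * c⁻¹ := mul_le_mul_right hI c
      _ = 1 := ENNReal.mul_inv_cancel hc0 hctop
  have hsub_ne : (1:ℝ≥0∞) - c * ∫⁻ s, ((s:ℝ≥0∞))⁻¹ ∂μ ≠ ⊤ :=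
    ne_top_of_le_ne_top one_ne_top tsub_le_self
  have huniv : rhoMap c μ Set.univ = 1 := by
    rw [rhoMap, Measure.add_apply, Measure.smul_apply, Measure.smul_apply,
      withDensity_apply _ MeasurableSet.univ, setLIntegral_univ, measure_univ,
      smul_eq_mul, smul_eq_mul, mul_one]
    exact add_tsub_cancel_of_le hcI
  have hfin : IsFiniteMeasure (rhoMap c μ) := ⟨by rw [huniv]; exact one_lt_top⟩
  intro n
  match n with
  | 0 =>
    simp only [pow_zero]
    refine ⟨integrable_const 1, ?_⟩
    rw [integral_const, Measure.real, huniv, ENNReal.toReal_one, one_smul, h00]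
  | Nat.succ n =>
    have hd := withDensity_inv_eq hμ0
    have hae := ae_inv_smul_pow hμ0 n
    have hintA : Integrable (fun s : ℝ≥0 => ((s:ℝ))^(n+1))
        (μ.withDensity fun s : ℝ≥0 => ((s:ℝ≥0∞))⁻¹) := by
      rw [hd, integrable_withDensity_iff_integrable_smul measurable_inv]
      exact (hμ n).1.congr hae.symm
    have hvalA : ∫ s, ((s:ℝ))^(n+1) ∂(μ.withDensity fun s : ℝ≥0 => ((s:ℝ≥0∞))⁻¹) = t₁ n := by
      rw [hd, integral_withDensity_eq_integral_smul measurable_inv,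
        integral_congr_ae hae, ← (hμ n).2]
    have hintB : Integrable (fun s : ℝ≥0 => ((s:ℝ))^(n+1))
        ((1 - c * ∫⁻ s, ((s:ℝ≥0∞))⁻¹ ∂μ) • Measure.dirac (0:ℝ≥0)) :=
      (integrable_pow_dirac (n+1)).smul_measure hsub_ne
    refine ⟨(hintA.smul_measure hctop).add_measure hintB, ?_⟩
    rw [rhoMap, integral_add_measure (hintA.smul_measure hctop) hintB,
      integral_smul_measure, hvalA, integral_smul_measure, integral_dirac]
    simp only [NNReal.coe_zero, zero_pow (Nat.succ_ne_zero n), smul_zero, mul_zero, add_zero,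
      smul_eq_mul]
    exact hrel n

/-- M5 -/
lemma muOfRho_rhoMap (hc0 : c ≠ 0) (hctop : c ≠ ⊤) {μ : Measure ℝ≥0}
    (hI : ∫⁻ s, ((s:ℝ≥0∞))⁻¹ ∂μ ≤ c⁻¹) : muOfRho c (rhoMap c μ) = μ := by
  have hμ0 := mu0_null hc0 hI
  have h2 : (Measure.dirac (0:ℝ≥0)).withDensity (fun s : ℝ≥0 => (s:ℝ≥0∞)) = 0 := by
    rw [← Measure.measure_univ_eq_zero, withDensity_apply _ MeasurableSet.univ,
      setLIntegral_univ, lintegral_dirac]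
    simp
  have h1 : (μ.withDensity fun s : ℝ≥0 => ((s:ℝ≥0∞))⁻¹).withDensity
      (fun s : ℝ≥0 => (s:ℝ≥0∞)) = μ.restrict ({0}ᶜ : Set ℝ≥0) := by
    rw [← withDensity_mul μ meas_inv meas_coe, inv_mul_coe,
      withDensity_indicator_one (measurableSet_singleton (0:ℝ≥0)).compl]
  have h3 : μ.restrict ({0}ᶜ : Set ℝ≥0) = μ := by
    conv_rhs => rw [← Measure.restrict_add_restrict_compl
      (μ := μ) (measurableSet_singleton (0:ℝ≥0)),
      Measure.restrict_eq_zero.mpr hμ0, zero_add]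
  rw [muOfRho, rhoMap, withDensity_add_measure, withDensity_smul_measure,
    withDensity_smul_measure, h1, h2, h3, smul_zero, add_zero, smul_smul,
    ENNReal.inv_mul_cancel hc0 hctop, one_smul]

lemma rep_smul {ν : Measure ℝ≥0} {t : ℕ → ℝ} (a : ℝ≥0∞) (ha : a ≠ ⊤) (h : IsRepMeasure ν t) :
    IsRepMeasure (a • ν) (fun n => a.toReal * t n) := fun n =>
  ⟨(h n).1.smul_measure ha, by simp only []; rw [integral_smul_measure, ← (h n).2, smul_eq_mul]⟩

lemma rep_congr {ν : Measure ℝ≥0} {t t' : ℕ → ℝ} (h : IsRepMeasure ν t)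
    (he : ∀ n, t' n = t n) : IsRepMeasure ν t' := fun n => ⟨(h n).1, by rw [he n, (h n).2]⟩

lemma det_t0 (hc0 : c ≠ 0) (hctop : c ≠ ⊤) (h00 : t₀ 0 = 1)
    (hrel : ∀ n, t₀ (n+1) = c.toReal * t₁ n) (hst : IsStieltjesMoment t₀)
    (hdet : IsDetStieltjesMoment t₁) : IsDetStieltjesMoment t₀ := by
  obtain ⟨ρ, hρ⟩ := hst
  refine ⟨ρ, hρ, fun ρ' hρ' => ?_⟩
  have h1 : muOfRho c ρ' = muOfRho c ρ :=
    hdet.unique (muOfRho_rep hc0 hctop hrel hρ') (muOfRho_rep hc0 hctop hrel hρ)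
  calc ρ' = rhoMap c (muOfRho c ρ') := (rhoMap_muOfRho hc0 hctop (rep_univ hρ' h00)).symm
    _ = rhoMap c (muOfRho c ρ) := by rw [h1]
    _ = ρ := rhoMap_muOfRho hc0 hctop (rep_univ hρ h00)

lemma det_shift (hc0 : c ≠ 0) (hctop : c ≠ ⊤)
    (hrel : ∀ n, t₀ (n+1) = c.toReal * t₁ n)
    (hdet : IsDetStieltjesMoment t₁) : IsDetStieltjesMoment (fun n => t₀ (n+1)) := by
  have hcr : c.toReal ≠ 0 := ENNReal.toReal_ne_zero.mpr ⟨hc0, hctop⟩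
  obtain ⟨μ, hμ, huniq⟩ := hdet
  refine ⟨c • μ, rep_congr (rep_smul c hctop hμ) (fun n => hrel n), fun ν hν => ?_⟩
  have h1 : IsRepMeasure (c⁻¹ • ν) t₁ :=
    rep_congr (rep_smul c⁻¹ (ENNReal.inv_ne_top.mpr hc0) hν)
      (fun n => by
        show t₁ n = c⁻¹.toReal * t₀ (n+1)
        rw [hrel n, ENNReal.toReal_inv, inv_mul_cancel_left₀ hcr])
  have h2 := huniq _ h1
  calc ν = c • (c⁻¹ • ν) := by
        rw [smul_smul, ENNReal.mul_inv_cancel hc0 hctop, one_smul]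
    _ = c • μ := by rw [h2]

end Abstract

section OpsAux
universe u
variable {H : Type u} [NormedAddCommGroup H] [InnerProductSpace ℂ H]

lemma mem_pmapPow_succ {S : H →ₗ.[ℂ] H} {n : ℕ} {x : H} :
    x ∈ (pmapPow S (n+1)).domain ↔
      ∃ hx : x ∈ S.domain, S ⟨x, hx⟩ ∈ (pmapPow S n).domain := by
  have hd : (pmapPow S (n+1)).domain = compDomain (pmapPow S n) S ⊓ S.domain := rfl
  rw [hd, Submodule.mem_inf]
  constructor
  · intro h
    exact h.1
  · intro h
    exact ⟨h, h.choose⟩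

lemma pmapComp_apply {A S : H →ₗ.[ℂ] H} {x : H} (h : x ∈ (pmapComp A S).domain)
    (hx : x ∈ S.domain) (h' : S ⟨x, hx⟩ ∈ A.domain) :
    (pmapComp A S) ⟨x, h⟩ = A ⟨S ⟨x, hx⟩, h'⟩ := by
  refine congrArg A.toFun (Subtype.ext ?_)
  show ((S.domRestrict (compDomain A S)) ⟨x, h⟩ : H) = S ⟨x, hx⟩
  exact LinearPMap.domRestrict_apply rfl

lemma pmapPow_zero_apply (S : H →ₗ.[ℂ] H) (x : H) (h : x ∈ (pmapPow S 0).domain) :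
    (pmapPow S 0) ⟨x, h⟩ = x :=
  LinearMap.id.toPMap_apply ⊤ ⟨x, h⟩

lemma mem_pmapPow_zero (S : H →ₗ.[ℂ] H) (x : H) : x ∈ (pmapPow S 0).domain :=
  Submodule.mem_top

lemma powApp_zero (S : H →ₗ.[ℂ] H) (x : H) : powApp S 0 x = x := by
  rw [powApp, dif_pos (mem_pmapPow_zero S x)]
  exact pmapPow_zero_apply S x _

end OpsAux
section TreeAux
variable {V : Type*} (T : DirectedTree V) (lam : V → ℂ) (u₀ u₁ : V)

lemma edge_of_chi (hchi : T.chi u₀ = {u₁}) : T.edge u₀ u₁ := by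
  have : u₁ ∈ T.chi u₀ := by rw [hchi]; rfl
  exact this

lemma par_eq (hedge : T.edge u₀ u₁) : T.par u₁ = u₀ := by
  have hex : ∃ u, T.edge u u₁ := ⟨u₀, hedge⟩
  rw [DirectedTree.par, dif_pos hex]
  exact T.parent_unique u₁ _ u₀ hex.choose_spec hedge

open Classical in
lemma eVec_apply (u v : V) : (eVec u : V → ℂ) v = if v = u then 1 else 0 := by
  by_cases h : v = u
  · subst h
    rw [if_pos rfl]
    exact lp.single_apply_self 2 v 1
  · rw [if_neg h]
    exact lp.single_apply_ne 2 u 1 h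

lemma lamMap_eVec (hchi : T.chi u₀ = {u₁}) :
    T.lamMap lam (eVec u₀ : V → ℂ) = ((lam u₁ • eVec u₁ : lp (fun _ : V => ℂ) 2) : V → ℂ) := by
  have hedge := edge_of_chi T u₀ u₁ hchi
  funext v
  rw [lp.coeFn_smul, Pi.smul_apply, eVec_apply, smul_eq_mul]
  by_cases hv : v = u₁
  · rw [hv, if_pos rfl, mul_one, DirectedTree.lamMap, if_pos ⟨u₀, hedge⟩, par_eq T u₀ u₁ hedge,
      eVec_apply, if_pos rfl, mul_one]
  · rw [if_neg hv, mul_zero, DirectedTree.lamMap]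
    split
    · next hnr =>
      have hne : T.par v ≠ u₀ := by
        intro hpar
        have hex : ∃ u, T.edge u v := hnr
        have hev : T.edge (T.par v) v := by
          rw [DirectedTree.par, dif_pos hex]
          exact hex.choose_spec
        rw [hpar] at hev
        have : v ∈ T.chi u₀ := hev
        rw [hchi] at this
        exact hv this
      rw [eVec_apply, if_neg hne, mul_zero]
    · rfl

lemma shift_eVec_apply (hchi : T.chi u₀ = {u₁}) (hx : eVec u₀ ∈ (T.shift lam).domain) :
    (T.shift lam) ⟨eVec u₀, hx⟩ = lam u₁ • eVec u₁ := by
  apply lp.ext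
  show T.lamMap lam (eVec u₀ : V → ℂ) = _
  exact lamMap_eVec T lam u₀ u₁ hchi

end TreeAux
section MainAux
variable {V : Type*} (T : DirectedTree V) (lam : V → ℂ) (u₀ u₁ : V)

lemma mem_eVec_u₁ (hchi : T.chi u₀ = {u₁})
    (h0 : ∀ n : ℕ, eVec u₀ ∈ (pmapPow (T.shift lam) n).domain) (hnz : lam u₁ ≠ 0) (n : ℕ) :
    eVec u₁ ∈ (pmapPow (T.shift lam) n).domain := by
  obtain ⟨hx, h'⟩ := mem_pmapPow_succ.mp (h0 (n+1))
  rw [shift_eVec_apply T lam u₀ u₁ hchi hx] at h'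
  have h2 := Submodule.smul_mem _ (lam u₁)⁻¹ h'
  rwa [smul_smul, inv_mul_cancel₀ hnz, one_smul] at h2

lemma powApp_succ_u₀ (hchi : T.chi u₀ = {u₁})
    (h0 : ∀ n : ℕ, eVec u₀ ∈ (pmapPow (T.shift lam) n).domain) (hnz : lam u₁ ≠ 0) (n : ℕ) :
    powApp (T.shift lam) (n+1) (eVec u₀) = lam u₁ • powApp (T.shift lam) n (eVec u₁) := by
  obtain ⟨hx, h'⟩ := mem_pmapPow_succ.mp (h0 (n+1))
  have hmem1 := mem_eVec_u₁ T lam u₀ u₁ hchi h0 hnz n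
  rw [powApp, dif_pos (h0 (n+1)), powApp, dif_pos hmem1]
  have e1 : (pmapPow (T.shift lam) (n+1)) ⟨eVec u₀, h0 (n+1)⟩
      = (pmapPow (T.shift lam) n) ⟨(T.shift lam) ⟨eVec u₀, hx⟩, h'⟩ :=
    pmapComp_apply (h0 (n+1)) hx h'
  rw [e1]
  have e2 : (pmapPow (T.shift lam) n) ⟨(T.shift lam) ⟨eVec u₀, hx⟩, h'⟩
      = (pmapPow (T.shift lam) n)
        (lam u₁ • (⟨eVec u₁, hmem1⟩ : (pmapPow (T.shift lam) n).domain)) := by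
    refine congrArg _ (Subtype.ext ?_)
    show ((T.shift lam) ⟨eVec u₀, hx⟩ : lp (fun _ : V => ℂ) 2) = lam u₁ • eVec u₁
    exact shift_eVec_apply T lam u₀ u₁ hchi hx
  rw [e2, LinearPMap.map_smul]

lemma moment_rel (hchi : T.chi u₀ = {u₁})
    (h0 : ∀ n : ℕ, eVec u₀ ∈ (pmapPow (T.shift lam) n).domain) (hnz : lam u₁ ≠ 0) (n : ℕ) :
    momentSeq (T.shift lam) (eVec u₀) (n+1)
      = ‖lam u₁‖^2 * momentSeq (T.shift lam) (eVec u₁) n := by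
  simp only [momentSeq]
  rw [powApp_succ_u₀ T lam u₀ u₁ hchi h0 hnz n, norm_smul, mul_pow]

lemma moment_zero (u : V) : momentSeq (T.shift lam) (eVec u) 0 = 1 := by
  classical
  simp only [momentSeq]
  rw [powApp_zero]
  have h1 : ‖eVec u‖ = 1 := by
    rw [eVec]
    have h2 := lp.norm_single (p := 2) (E := fun _ : V => ℂ) (by norm_num) u (1:ℂ)
    rw [h2]
    exact norm_one
  rw [h1, one_pow]

end MainAux

/-- hereditary property of Stieltjes moment sequences for a parent with
exactly one child, together with the bijection between representing measures and the
determinacy assertions. -/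
theorem stmt11 {V : Type*} (T : DirectedTree V) (lam : V → ℂ) (u₀ u₁ : V)
    (hchi : T.chi u₀ = {u₁})
    (h0 : ∀ n : ℕ, eVec u₀ ∈ (pmapPow (T.shift lam) n).domain)
    (hst : IsStieltjesMoment (momentSeq (T.shift lam) (eVec u₀)))
    (hnz : lam u₁ ≠ 0) :
    (∀ n : ℕ, eVec u₁ ∈ (pmapPow (T.shift lam) n).domain)
    ∧ IsStieltjesMoment (momentSeq (T.shift lam) (eVec u₁))
    ∧ (∀ μ : Measure ℝ≥0, IsRepMeasure μ (momentSeq (T.shift lam) (eVec u₁)) →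
        (∫⁻ s, ((s : ℝ≥0∞))⁻¹ ∂μ) ≤ ((‖lam u₁‖₊ : ℝ≥0∞) ^ 2)⁻¹ →
        IsRepMeasure (rhoMap ((‖lam u₁‖₊ : ℝ≥0∞) ^ 2) μ) (momentSeq (T.shift lam) (eVec u₀))
        ∧ muOfRho ((‖lam u₁‖₊ : ℝ≥0∞) ^ 2) (rhoMap ((‖lam u₁‖₊ : ℝ≥0∞) ^ 2) μ) = μ)
    ∧ (∀ ρ : Measure ℝ≥0, IsRepMeasure ρ (momentSeq (T.shift lam) (eVec u₀)) →
        IsRepMeasure (muOfRho ((‖lam u₁‖₊ : ℝ≥0∞) ^ 2) ρ) (momentSeq (T.shift lam) (eVec u₁))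
        ∧ (∫⁻ s, ((s : ℝ≥0∞))⁻¹ ∂(muOfRho ((‖lam u₁‖₊ : ℝ≥0∞) ^ 2) ρ))
            ≤ ((‖lam u₁‖₊ : ℝ≥0∞) ^ 2)⁻¹
        ∧ rhoMap ((‖lam u₁‖₊ : ℝ≥0∞) ^ 2) (muOfRho ((‖lam u₁‖₊ : ℝ≥0∞) ^ 2) ρ) = ρ)
    ∧ (IsDetStieltjesMoment (momentSeq (T.shift lam) (eVec u₁)) →
        IsDetStieltjesMoment (fun n => momentSeq (T.shift lam) (eVec u₀) (n + 1))
        ∧ IsDetStieltjesMoment (momentSeq (T.shift lam) (eVec u₀))) := by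
  have hnn : ‖lam u₁‖₊ ≠ 0 := nnnorm_ne_zero_iff.mpr hnz
  have hc0 : ((‖lam u₁‖₊ : ℝ≥0∞) ^ 2) ≠ 0 := pow_ne_zero 2 (ENNReal.coe_ne_zero.mpr hnn)
  have hctop : ((‖lam u₁‖₊ : ℝ≥0∞) ^ 2) ≠ ⊤ := ENNReal.pow_ne_top ENNReal.coe_ne_top
  have hcr : (((‖lam u₁‖₊ : ℝ≥0∞) ^ 2)).toReal = ‖lam u₁‖ ^ 2 := by
    rw [ENNReal.toReal_pow, ENNReal.coe_toReal, coe_nnnorm]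
  have hrel : ∀ n, momentSeq (T.shift lam) (eVec u₀) (n+1)
      = (((‖lam u₁‖₊ : ℝ≥0∞) ^ 2)).toReal * momentSeq (T.shift lam) (eVec u₁) n := by
    intro n
    rw [hcr]
    exact moment_rel T lam u₀ u₁ hchi h0 hnz n
  have h00 := moment_zero T lam u₀
  refine ⟨mem_eVec_u₁ T lam u₀ u₁ hchi h0 hnz, ?_, ?_, ?_, ?_⟩
  · obtain ⟨ρ, hρ⟩ := hst
    exact ⟨muOfRho ((‖lam u₁‖₊ : ℝ≥0∞) ^ 2) ρ, muOfRho_rep hc0 hctop hrel hρ⟩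
  · intro μ hμ hI
    exact ⟨rhoMap_rep hc0 hctop h00 hrel hμ hI, muOfRho_rhoMap hc0 hctop hI⟩
  · intro ρ hρ
    exact ⟨muOfRho_rep hc0 hctop hrel hρ, muOfRho_I_le (rep_univ hρ h00),
      rhoMap_muOfRho hc0 hctop (rep_univ hρ h00)⟩
  · intro hdet
    exact ⟨det_shift hc0 hctop hrel hdet, det_t0 hc0 hctop h00 hrel hst hdet⟩


end
end

section
/- Let T be a directed tree, λ = {λ_v}_{v∈V°} a system of complex numbers, {ε_v}_{v∈V} a system of nonnegative reals, and {μ_v}_{v∈V} a system of Borel probability measures on [0,∞) satisfying, for every u ∈ V and Borel σ ⊆ [0,∞), μ_u(σ) = ∑_{v∈Chi(u)} |λ_v|² ∫_σ (1/s) dμ_v(s) + ε_u δ₀(σ). Let S_λ be the weighted shift on T with weights λ. Then S_λ is a bounded operator defined on all of ℓ²(V) if and only if there exists a real number M ≥ 0 such that the closed support of μ_u is contained in [0,M] for every u ∈ V. -/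
open MeasureTheory ENNReal
open scoped NNReal
noncomputable section

section Stmt14Aux

open MeasureTheory ENNReal
open scoped NNReal

variable {V : Type*}

/-- The square-summability functional in `ℝ≥0∞`. -/
def N2 (f : V → ℂ) : ℝ≥0∞ := ∑' v, (‖f v‖₊ : ℝ≥0∞) ^ 2

lemma memℓp_iff_summable {f : V → ℂ} :
    Memℓp f 2 ↔ Summable (fun v => ‖f v‖₊ ^ 2) := by
  rw [memℓp_gen_iff (by norm_num : 0 < (2:ℝ≥0∞).toReal)]
  rw [← NNReal.summable_coe]
  apply summable_congr
  intro v
  rw [show ((2:ℝ≥0∞).toReal) = ((2:ℕ):ℝ) by norm_num, Real.rpow_natCast]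
  push_cast
  rfl

lemma memℓp_iff_N2 {f : V → ℂ} : Memℓp f 2 ↔ N2 f < ∞ := by
  rw [memℓp_iff_summable, N2, lt_top_iff_ne_top]
  have : ∀ v, (‖f v‖₊ : ℝ≥0∞) ^ 2 = ((‖f v‖₊ ^ 2 : ℝ≥0) : ℝ≥0∞) := by intro v; push_cast; ring
  simp_rw [this]
  exact (ENNReal.tsum_coe_ne_top_iff_summable).symm

lemma nnnorm_sq_eq_N2 (g : lp (fun _ : V => ℂ) 2) : (‖g‖₊ : ℝ≥0∞) ^ 2 = N2 (g : V → ℂ) := by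
  have h := lp.norm_rpow_eq_tsum (p := 2) (by norm_num) g
  have h2 : ∀ (x : ℝ), x ^ ((2:ℝ≥0∞).toReal) = x ^ (2:ℕ) := by
    intro x
    rw [show ((2:ℝ≥0∞).toReal) = ((2:ℕ):ℝ) by norm_num, Real.rpow_natCast]
  simp_rw [h2] at h
  have hsum : Summable (fun v => ‖(g : V → ℂ) v‖ ^ (2:ℕ)) := by
    have := memℓp_iff_summable.mp (lp.memℓp g)
    rw [← NNReal.summable_coe] at this
    simpa using this
  calc (‖g‖₊ : ℝ≥0∞) ^ 2 = ENNReal.ofReal (‖g‖ ^ (2:ℕ)) := by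
        rw [← Real.rpow_natCast, ← ENNReal.ofReal_rpow_of_nonneg (norm_nonneg _) (by norm_num),
          ofReal_norm_eq_enorm, enorm_eq_nnnorm, ENNReal.rpow_natCast]
    _ = ENNReal.ofReal (∑' v, ‖(g : V → ℂ) v‖ ^ (2:ℕ)) := by rw [h]
    _ = ∑' v, ENNReal.ofReal (‖(g : V → ℂ) v‖ ^ (2:ℕ)) :=
        ENNReal.ofReal_tsum_of_nonneg (fun v => by positivity) hsum
    _ = N2 (g : V → ℂ) := by
        apply tsum_congr; intro v
        rw [← Real.rpow_natCast, ← ENNReal.ofReal_rpow_of_nonneg (norm_nonneg _) (by norm_num),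
          ofReal_norm_eq_enorm, enorm_eq_nnnorm, ENNReal.rpow_natCast]

variable (T : DirectedTree V)

lemma DirectedTree.edge_par {v : V} (h : T.nonRoot v) : T.edge (T.par v) v := by
  have h' : ∃ u, T.edge u v := h
  rw [DirectedTree.par, dif_pos h']
  exact h'.choose_spec

lemma DirectedTree.par_eq {u v : V} (h : T.edge u v) : T.par v = u :=
  T.parent_unique v _ _ (T.edge_par ⟨u, h⟩) h

/-- The non-root vertices are partitioned by the children sets. -/
def DirectedTree.chiEquiv : {v : V // T.nonRoot v} ≃ (Σ u : V, {v : V // T.edge u v}) where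
  toFun v := ⟨T.par v.1, v.1, T.edge_par v.2⟩
  invFun p := ⟨p.2.1, ⟨p.1, p.2.2⟩⟩
  left_inv v := rfl
  right_inv p := by
    obtain ⟨u, v, h⟩ := p
    have hp : T.par v = u := T.par_eq h
    subst hp
    rfl

/-- `c(u) = ∑ _{v ∈ Chi(u)} |λ_v|²` in `ℝ≥0∞`. -/
def cEnn (lam : V → ℂ) (u : V) : ℝ≥0∞ := ∑' v : {v : V // T.edge u v}, (‖lam v.1‖₊ : ℝ≥0∞) ^ 2

lemma N2_lamMap (lam : V → ℂ) (f : V → ℂ) :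
    N2 (T.lamMap lam f) = ∑' u : V, cEnn T lam u * (‖f u‖₊ : ℝ≥0∞) ^ 2 := by
  classical
  have hsupp : Function.support (fun v : V => (‖T.lamMap lam f v‖₊ : ℝ≥0∞) ^ 2)
      ⊆ {v : V | T.nonRoot v} := by
    intro v hv
    by_contra hnr
    simp only [Function.mem_support, DirectedTree.lamMap] at hv
    rw [if_neg (show ¬ T.nonRoot v from hnr)] at hv
    simp at hv
  have h1 : N2 (T.lamMap lam f)
      = ∑' v : {v : V // T.nonRoot v}, (‖T.lamMap lam f v.1‖₊ : ℝ≥0∞) ^ 2 :=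
    (tsum_subtype_eq_of_support_subset hsupp).symm
  have h2 : ∀ v : {v : V // T.nonRoot v}, (‖T.lamMap lam f v.1‖₊ : ℝ≥0∞) ^ 2
      = (‖lam v.1‖₊ : ℝ≥0∞) ^ 2 * (‖f (T.par v.1)‖₊ : ℝ≥0∞) ^ 2 := by
    rintro ⟨v, hv⟩
    simp only [DirectedTree.lamMap, if_pos hv, nnnorm_mul]
    push_cast
    ring
  have h3 : (∑' (b : {v : V // T.nonRoot v}), (‖lam b.1‖₊ : ℝ≥0∞) ^ 2 * (‖f (T.par b.1)‖₊ : ℝ≥0∞) ^ 2)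
      = ∑' p : Σ u : V, {v : V // T.edge u v}, (‖lam p.2.1‖₊ : ℝ≥0∞) ^ 2 * (‖f p.1‖₊ : ℝ≥0∞) ^ 2 :=
    Equiv.tsum_eq (T.chiEquiv) (fun p : Σ u : V, {v : V // T.edge u v} =>
      (‖lam p.2.1‖₊ : ℝ≥0∞) ^ 2 * (‖f p.1‖₊ : ℝ≥0∞) ^ 2)
  rw [h1, tsum_congr h2, h3, ENNReal.tsum_sigma']
  apply tsum_congr
  intro u
  show (∑' (b : {v : V // T.edge u v}), (‖lam b.1‖₊ : ℝ≥0∞) ^ 2 * (‖f u‖₊ : ℝ≥0∞) ^ 2)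
      = cEnn T lam u * (‖f u‖₊ : ℝ≥0∞) ^ 2
  exact ENNReal.tsum_mul_right

open Classical in
lemma eVec_self (u : V) : (eVec u : V → ℂ) u = 1 := lp.single_apply_self 2 u 1

open Classical in
lemma eVec_ne {u w : V} (h : w ≠ u) : (eVec u : V → ℂ) w = 0 := lp.single_apply_ne 2 u 1 h

lemma N2_lamMap_eVec (lam : V → ℂ) (u : V) :
    N2 (T.lamMap lam (eVec u)) = cEnn T lam u := by
  classical
  rw [N2_lamMap]
  rw [tsum_eq_single u]
  · rw [eVec_self]; simp
  · intro w hw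
    rw [eVec_ne hw]; simp

section Measures

variable (lam : V → ℂ) (μ : V → Measure ℝ≥0) (ε : V → ℝ≥0)

lemma lintegral_consistent {u : V} (h : consistentAt T lam μ ε u)
    {g : ℝ≥0 → ℝ≥0∞} (hg : Measurable g) :
    ∫⁻ s, g s ∂(μ u) = (∑' v : {v : V // T.edge u v},
      (‖lam v.1‖₊ : ℝ≥0∞) ^ 2 * ∫⁻ s, ((s : ℝ≥0∞))⁻¹ * g s ∂(μ v.1)) + (ε u : ℝ≥0∞) * g 0 := by
  have hμ : μ u = MeasureTheory.Measure.sum (fun v : {v : V // T.edge u v} =>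
      ((‖lam v.1‖₊ : ℝ≥0∞) ^ 2) • ((μ v.1).withDensity fun s => ((s : ℝ≥0∞))⁻¹))
      + (ε u : ℝ≥0∞) • MeasureTheory.Measure.dirac (0 : ℝ≥0) := by
    ext σ hσ
    rw [h σ hσ]
    simp only [Measure.add_apply, Measure.sum_apply _ hσ, Measure.smul_apply, smul_eq_mul,
      withDensity_apply _ hσ]
  rw [hμ, lintegral_add_measure, lintegral_sum_measure, lintegral_smul_measure, lintegral_dirac]
  congr 1
  apply tsum_congr
  intro v
  rw [lintegral_smul_measure,
    lintegral_withDensity_eq_lintegral_mul _ (f := fun s : ℝ≥0 => ((s : ℝ≥0∞))⁻¹)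
      (measurable_coe_nnreal_ennreal.inv) hg]
  rfl

/-- the `n`-th moment of `μ u`. -/
def momentE (u : V) (n : ℕ) : ℝ≥0∞ := ∫⁻ s, ((s : ℝ≥0∞)) ^ n ∂(μ u)

lemma dirac_zero_of_lam_ne {u v : V} (hprob : ∀ w, IsProbabilityMeasure (μ w))
    (h : consistentAt T lam μ ε u) (hedge : T.edge u v) (hlv : lam v ≠ 0) :
    μ v {0} = 0 := by
  by_contra h0
  have hmeas : MeasurableSet ({0} : Set ℝ≥0) := measurableSet_singleton 0
  have h1 := h {0} hmeas
  have hle : (‖lam v‖₊ : ℝ≥0∞) ^ 2 * ∫⁻ s in {0}, ((s : ℝ≥0∞))⁻¹ ∂(μ v) ≤ μ u {0} := by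
    rw [h1]
    refine le_trans ?_ le_self_add
    exact ENNReal.le_tsum (⟨v, hedge⟩ : {v : V // T.edge u v})
  have hint : ∫⁻ s in {0}, ((s : ℝ≥0∞))⁻¹ ∂(μ v) = ∞ := by
    rw [lintegral_singleton]
    simp only [ENNReal.coe_zero, ENNReal.inv_zero]
    exact ENNReal.top_mul h0
  rw [hint, ENNReal.mul_top (by simpa using hlv)] at hle
  have : μ u {0} ≤ 1 := prob_le_one
  rw [top_le_iff.mp hle] at this
  exact (by simp : ¬ ((⊤:ℝ≥0∞) ≤ 1)) this

lemma moment_zero_s14 (hprob : ∀ w, IsProbabilityMeasure (μ w)) (u : V) : momentE μ u 0 = 1 := by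
  simp [momentE]

lemma moment_succ_le {u : V} (h : consistentAt T lam μ ε u) (n : ℕ) :
    momentE μ u (n + 1) ≤ ∑' v : {v : V // T.edge u v},
      (‖lam v.1‖₊ : ℝ≥0∞) ^ 2 * momentE μ v.1 n := by
  have hg : Measurable (fun s : ℝ≥0 => ((s : ℝ≥0∞)) ^ (n + 1)) :=
    (measurable_coe_nnreal_ennreal).pow_const _
  have := lintegral_consistent T lam μ ε h hg
  unfold momentE
  rw [this]
  simp only [ENNReal.coe_zero, zero_pow (Nat.succ_ne_zero n), mul_zero, add_zero]
  refine ENNReal.tsum_le_tsum (fun v => ?_)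
  refine mul_le_mul_right ?_ _
  refine lintegral_mono (fun s => ?_)
  rcases eq_or_ne s 0 with hs | hs
  · simp [hs]
  · have hs' : ((s : ℝ≥0∞)) ≠ 0 := by simpa using hs
    rw [pow_succ, mul_comm ((s:ℝ≥0∞) ^ n), ← mul_assoc,
      ENNReal.inv_mul_cancel hs' (ENNReal.coe_ne_top), one_mul]

lemma cEnn_le_moment_one {u : V} (hprob : ∀ w, IsProbabilityMeasure (μ w))
    (hcons : ∀ w, consistentAt T lam μ ε w) :
    cEnn T lam u ≤ momentE μ u 1 := by
  have hg : Measurable (fun s : ℝ≥0 => ((s : ℝ≥0∞))) := measurable_coe_nnreal_ennreal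
  have h := lintegral_consistent T lam μ ε (hcons u) hg
  have h1 : momentE μ u 1 = ∫⁻ s, ((s : ℝ≥0∞)) ∂(μ u) := by
    unfold momentE; simp
  rw [h1, h]
  refine le_trans ?_ le_self_add
  rw [cEnn]
  refine ENNReal.tsum_le_tsum (fun v => ?_)
  rcases eq_or_ne (lam v.1) 0 with hz | hz
  · simp [hz]
  · have h0 : μ v.1 {0} = 0 := dirac_zero_of_lam_ne T lam μ ε hprob (hcons u) v.2 hz
    have hint : ∫⁻ s, ((s : ℝ≥0∞))⁻¹ * ((s : ℝ≥0∞)) ∂(μ v.1) = 1 := by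
      have hone : ∫⁻ _, (1:ℝ≥0∞) ∂(μ v.1) = 1 := by
        haveI := hprob v.1
        simp
      rw [← hone]
      apply lintegral_congr_ae
      have hae : ∀ᵐ s ∂(μ v.1), s ≠ 0 := by
        rw [ae_iff]
        convert h0 using 2
        ext s
        simp
      filter_upwards [hae] with s hs
      exact ENNReal.inv_mul_cancel (by simpa using hs) ENNReal.coe_ne_top
    rw [hint, mul_one]

lemma moment_le_pow {B : ℝ≥0∞} (hprob : ∀ w, IsProbabilityMeasure (μ w))
    (hcons : ∀ w, consistentAt T lam μ ε w)
    (hB : ∀ w, cEnn T lam w ≤ B) (n : ℕ) (u : V) :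
    momentE μ u n ≤ B ^ n := by
  induction n generalizing u with
  | zero => rw [moment_zero_s14 μ hprob u]; simp
  | succ n ih =>
    calc momentE μ u (n+1) ≤ ∑' v : {v : V // T.edge u v},
          (‖lam v.1‖₊ : ℝ≥0∞) ^ 2 * momentE μ v.1 n := moment_succ_le T lam μ ε (hcons u) n
      _ ≤ ∑' v : {v : V // T.edge u v}, (‖lam v.1‖₊ : ℝ≥0∞) ^ 2 * B ^ n :=
          ENNReal.tsum_le_tsum (fun v => mul_le_mul_right (ih v.1) _)
      _ = cEnn T lam u * B ^ n := ENNReal.tsum_mul_right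
      _ ≤ B * B ^ n := mul_le_mul_left (hB u) _
      _ = B ^ (n+1) := (pow_succ' B n).symm

lemma support_bound_of_moments {u : V} {M : ℝ≥0}
    (hm : ∀ n : ℕ, momentE μ u n ≤ ((M : ℝ≥0∞)) ^ n) :
    μ u {s : ℝ≥0 | M < s} = 0 := by
  have key : ∀ a : ℝ≥0, M < a → μ u {s : ℝ≥0 | a ≤ s} = 0 := by
    intro a ha
    have ha0 : (a : ℝ≥0∞) ≠ 0 := by
      simp only [ne_eq, ENNReal.coe_eq_zero]
      exact (lt_of_le_of_lt (zero_le (a := M)) ha).ne'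
    have hn : ∀ n : ℕ, μ u {s : ℝ≥0 | a ≤ s} ≤ ((M : ℝ≥0∞) * ((a : ℝ≥0∞))⁻¹) ^ n := by
      intro n
      have hmeas : AEMeasurable (fun s : ℝ≥0 => ((s : ℝ≥0∞)) ^ n) (μ u) :=
        ((measurable_coe_nnreal_ennreal).pow_const n).aemeasurable
      have hcheb := mul_meas_ge_le_lintegral₀ hmeas ((a : ℝ≥0∞) ^ n)
      have hsub : {s : ℝ≥0 | a ≤ s} ⊆ {s : ℝ≥0 | (a : ℝ≥0∞) ^ n ≤ ((s : ℝ≥0∞)) ^ n} := by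
        intro s hs
        simp only [Set.mem_setOf_eq] at hs ⊢
        exact pow_le_pow_left' (by exact_mod_cast hs) n
      have h1 : (a : ℝ≥0∞) ^ n * μ u {s : ℝ≥0 | a ≤ s} ≤ (M : ℝ≥0∞) ^ n :=
        le_trans (mul_le_mul_right (measure_mono hsub) _) (le_trans hcheb (hm n))
      have hpow0 : ((a : ℝ≥0∞)) ^ n ≠ 0 := pow_ne_zero n ha0
      have hpowt : ((a : ℝ≥0∞)) ^ n ≠ ∞ := by
        exact_mod_cast ENNReal.coe_ne_top (r := a ^ n)
      rw [mul_pow, ← ENNReal.inv_pow, ← div_eq_mul_inv,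
        ENNReal.le_div_iff_mul_le (Or.inl hpow0) (Or.inl hpowt), mul_comm]
      exact h1
    have hr : (M : ℝ≥0∞) * ((a : ℝ≥0∞))⁻¹ < 1 := by
      rw [← div_eq_mul_inv, ENNReal.div_lt_iff (Or.inl ha0) (Or.inl ENNReal.coe_ne_top), one_mul]
      exact_mod_cast ha
    have htend := ENNReal.tendsto_pow_atTop_nhds_zero_of_lt_one hr
    exact le_zero_iff.mp (ge_of_tendsto' htend hn)
  have hsub : {s : ℝ≥0 | M < s} ⊆ ⋃ k : ℕ, {s : ℝ≥0 | M + ((k : ℝ≥0) + 1)⁻¹ ≤ s} := by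
    intro s hs
    simp only [Set.mem_setOf_eq] at hs
    have hs' : (M : ℝ) < (s : ℝ) := hs
    obtain ⟨k, hk⟩ := exists_nat_one_div_lt (sub_pos.mpr hs')
    refine Set.mem_iUnion.mpr ⟨k, ?_⟩
    show M + ((k : ℝ≥0) + 1)⁻¹ ≤ s
    rw [← NNReal.coe_le_coe]
    push_cast
    rw [one_div] at hk
    linarith
  refine measure_mono_null hsub (measure_iUnion_null (fun k => key _ ?_))
  have : (0 : ℝ≥0) < ((k : ℝ≥0) + 1)⁻¹ := by positivity
  exact lt_add_of_pos_right M this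

lemma moment_one_le_of_support {u : V} (hprob : ∀ w, IsProbabilityMeasure (μ w)) {M : ℝ≥0}
    (hM : μ u {s : ℝ≥0 | M < s} = 0) : momentE μ u 1 ≤ (M : ℝ≥0∞) := by
  haveI := hprob u
  have hae : ∀ᵐ (s : ℝ≥0) ∂(μ u), ((s : ℝ≥0∞)) ^ 1 ≤ (M : ℝ≥0∞) := by
    rw [ae_iff]
    refine measure_mono_null ?_ hM
    intro s hs
    simp only [Set.mem_setOf_eq, pow_one, not_le] at hs
    exact_mod_cast hs
  calc momentE μ u 1 ≤ ∫⁻ _, (M : ℝ≥0∞) ∂(μ u) := lintegral_mono_ae hae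
    _ = M := by simp

end Measures
end Stmt14Aux

/-- a weighted shift admitting a consistent system of probability measures
is bounded and everywhere defined iff the measures have uniformly bounded supports. -/
theorem stmt14 {V : Type*} (T : DirectedTree V) (lam : V → ℂ)
    (ε : V → ℝ≥0) (μ : V → Measure ℝ≥0)
    (hprob : ∀ v : V, IsProbabilityMeasure (μ v))
    (hcons : ∀ u : V, consistentAt T lam μ ε u) :
    ((T.shift lam).domain = ⊤ ∧ ∃ C : ℝ, ∀ x : (T.shift lam).domain,
        ‖T.shift lam x‖ ≤ C * ‖(x : lp (fun _ : V => ℂ) 2)‖)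
    ↔ ∃ M : ℝ≥0, ∀ u : V, μ u {s : ℝ≥0 | M < s} = 0 := by
  constructor
  · rintro ⟨hdom, C, hC⟩
    set c : ℝ≥0 := C.toNNReal with hc
    have hB : ∀ w : V, cEnn T lam w ≤ ((c : ℝ≥0∞)) ^ 2 := by
      intro w
      have hmem : (eVec w : lp (fun _ : V => ℂ) 2) ∈ (T.shift lam).domain := by
        rw [hdom]; exact Submodule.mem_top
      have hnorm1 : ‖(eVec w : lp (fun _ : V => ℂ) 2)‖ = 1 := by
        classical
        rw [eVec]
        have := lp.norm_single (p := 2) (E := fun _ : V => ℂ) (by norm_num) w (1 : ℂ)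
        simpa using this
      have hb := hC ⟨eVec w, hmem⟩
      rw [hnorm1, mul_one] at hb
      have hble : ‖T.shift lam ⟨eVec w, hmem⟩‖₊ ≤ c := by
        rw [← norm_toNNReal]
        exact Real.toNNReal_mono hb
      have heq : cEnn T lam w = ((‖T.shift lam ⟨eVec w, hmem⟩‖₊ : ℝ≥0∞)) ^ 2 := by
        rw [nnnorm_sq_eq_N2, ← N2_lamMap_eVec T lam w]
        rfl
      rw [heq]
      exact pow_le_pow_left' (by exact_mod_cast hble) 2
    refine ⟨c ^ 2, fun u => ?_⟩
    apply support_bound_of_moments μ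
    intro n
    have := moment_le_pow T lam μ ε hprob hcons hB n u
    have hcast : (((c ^ 2 : ℝ≥0) : ℝ≥0∞)) ^ n = (((c : ℝ≥0∞)) ^ 2) ^ n := by push_cast; ring
    rw [hcast]
    exact this
  · rintro ⟨M, hM⟩
    have hc : ∀ w : V, cEnn T lam w ≤ (M : ℝ≥0∞) := fun w =>
      le_trans (cEnn_le_moment_one T lam μ ε hprob hcons)
        (moment_one_le_of_support μ hprob (hM w))
    have hkey : ∀ f : lp (fun _ : V => ℂ) 2,
        N2 (T.lamMap lam (f : V → ℂ)) ≤ (M : ℝ≥0∞) * N2 (f : V → ℂ) := by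
      intro f
      rw [N2_lamMap]
      calc (∑' u : V, cEnn T lam u * ((‖(f : V → ℂ) u‖₊ : ℝ≥0∞)) ^ 2)
          ≤ ∑' u : V, (M : ℝ≥0∞) * ((‖(f : V → ℂ) u‖₊ : ℝ≥0∞)) ^ 2 :=
            ENNReal.tsum_le_tsum (fun u => mul_le_mul_left (hc u) _)
        _ = (M : ℝ≥0∞) * N2 (f : V → ℂ) := ENNReal.tsum_mul_left
    have hdom : (T.shift lam).domain = ⊤ := by
      rw [Submodule.eq_top_iff']
      intro f
      show Memℓp (T.lamMap lam (f : V → ℂ)) 2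
      rw [memℓp_iff_N2]
      refine lt_of_le_of_lt (hkey f) ?_
      exact ENNReal.mul_lt_top ENNReal.coe_lt_top (memℓp_iff_N2.mp (lp.memℓp f))
    refine ⟨hdom, (NNReal.sqrt M : ℝ), fun x => ?_⟩
    have h2 : (‖T.shift lam x‖₊ : ℝ≥0∞) ^ 2
        ≤ (M : ℝ≥0∞) * ((‖(x : lp (fun _ : V => ℂ) 2)‖₊ : ℝ≥0∞)) ^ 2 := by
      rw [nnnorm_sq_eq_N2, nnnorm_sq_eq_N2]
      exact hkey _
    have h3 : ‖T.shift lam x‖₊ ^ 2 ≤ M * ‖(x : lp (fun _ : V => ℂ) 2)‖₊ ^ 2 := by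
      rw [← ENNReal.coe_pow, ← ENNReal.coe_pow, ← ENNReal.coe_mul, ENNReal.coe_le_coe] at h2
      exact h2
    have h4 : ‖T.shift lam x‖₊ ≤ NNReal.sqrt M * ‖(x : lp (fun _ : V => ℂ) 2)‖₊ := by
      have h5 := NNReal.sqrt_le_sqrt.mpr h3
      rwa [NNReal.sqrt_sq, NNReal.sqrt_mul, NNReal.sqrt_sq] at h5
    calc ‖T.shift lam x‖ = ((‖T.shift lam x‖₊ : ℝ)) := rfl
      _ ≤ ((NNReal.sqrt M * ‖(x : lp (fun _ : V => ℂ) 2)‖₊ : ℝ≥0) : ℝ) := by exact_mod_cast h4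
      _ = (NNReal.sqrt M : ℝ) * ‖(x : lp (fun _ : V => ℂ) 2)‖ := by push_cast; rfl

end
end

section
/- Let T be a directed tree with V° ≠ ∅. If S_λ is a hyponormal weighted shift on T all of whose weights λ_v (v ∈ V°) are nonzero, then T is leafless (every vertex has at least one child); in particular, S_λ is injective and V is infinite and countable. -/
open MeasureTheory ENNReal
open scoped NNReal
noncomputable section

section Aux

variable {V : Type*}

namespace DirectedTree

theorem par_eq_of_edge (T : DirectedTree V) {u v : V} (h : T.edge u v) : T.par v = u := by
  have hex : ∃ w : V, T.edge w v := ⟨u, h⟩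
  rw [par, dif_pos hex]
  exact T.parent_unique v _ u hex.choose_spec h

theorem nonRoot_of_edge (T : DirectedTree V) {u v : V} (h : T.edge u v) : T.nonRoot v := ⟨u, h⟩

theorem lamMap_apply_of_edge (T : DirectedTree V) (lam : V → ℂ) (f : V → ℂ) {u v : V}
    (h : T.edge u v) : T.lamMap lam f v = lam v * f u := by
  rw [lamMap, if_pos (T.nonRoot_of_edge h), T.par_eq_of_edge h]

end DirectedTree

open DirectedTree in
theorem exists_mem_domain_ne {V : Type*} (T : DirectedTree V) (lam : V → ℂ)
    (hd : Dense ((T.shift lam).domain : Set (lp (fun _ : V => ℂ) 2))) (p : V) :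
    ∃ f : lp (fun _ : V => ℂ) 2, ∃ _ : f ∈ (T.shift lam).domain, f p ≠ 0 := by
  classical
  by_contra hcon
  push_neg at hcon
  have hmem := hd (eVec p)
  rw [Metric.mem_closure_iff] at hmem
  obtain ⟨g, hg, hdist⟩ := hmem 1 one_pos
  have h1 : ‖(eVec p - g) p‖ ≤ ‖eVec p - g‖ :=
    lp.norm_apply_le_norm (by norm_num) _ _
  have h2 : (eVec p - g) p = 1 := by
    have : (eVec p : V → ℂ) p = 1 := lp.single_apply_self 2 p 1
    rw [lp.coeFn_sub, Pi.sub_apply, this, hcon g hg, sub_zero]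
  rw [h2] at h1
  simp only [norm_one] at h1
  rw [dist_eq_norm] at hdist
  linarith

end Aux

open DirectedTree in
theorem chi_countable_of_dense {V : Type*} (T : DirectedTree V) (lam : V → ℂ)
    (hnz : ∀ v : V, T.nonRoot v → lam v ≠ 0)
    (hd : Dense ((T.shift lam).domain : Set (lp (fun _ : V => ℂ) 2))) (u : V) :
    (T.chi u).Countable := by
  classical
  obtain ⟨f, hf, hfu⟩ := exists_mem_domain_ne T lam hd u
  have hsum : Summable fun v => ‖T.lamMap lam (⇑f) v‖ ^ (2 : ℝ≥0∞).toReal :=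
    (memℓp_gen_iff (by norm_num)).1 hf
  have hsupp := hsum.countable_support
  refine hsupp.mono ?_
  intro v hv
  have hval : T.lamMap lam (⇑f) v = lam v * f u := T.lamMap_apply_of_edge lam (⇑f) hv
  have hne : T.lamMap lam (⇑f) v ≠ 0 := by
    rw [hval]; exact mul_ne_zero (hnz v ⟨u, hv⟩) hfu
  have : (0:ℝ) < ‖T.lamMap lam (⇑f) v‖ := norm_pos_iff.mpr hne
  exact (Real.rpow_pos_of_pos this _).ne'

open DirectedTree in
theorem leafless_of_hyp {V : Type*} (T : DirectedTree V) (hV : ∃ v : V, T.nonRoot v)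
    (lam : V → ℂ) (hnz : ∀ v : V, T.nonRoot v → lam v ≠ 0)
    (hhyp : IsHyponormal (T.shift lam)) : T.Leafless := by
  classical
  obtain ⟨hd, hH⟩ := hhyp
  intro u
  by_contra hno
  push_neg at hno
  by_cases hroot : T.nonRoot u
  · -- u has a parent; use hyponormality
    obtain ⟨p, hp⟩ := hroot
    -- e_u is in the domain and S e_u = 0
    have hzero : T.lamMap lam (⇑(eVec u : lp (fun _ : V => ℂ) 2)) = 0 := by
      funext v
      show T.lamMap lam (⇑(eVec u : lp (fun _ : V => ℂ) 2)) v = 0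
      rw [lamMap]
      split
      · next hv =>
        obtain ⟨w, hw⟩ := hv
        have hpar : T.par v = w := T.par_eq_of_edge hw
        have hwu : w ≠ u := fun h => hno v (h ▸ hw)
        have : (eVec u : V → ℂ) (T.par v) = 0 := by
          rw [hpar]; exact lp.single_apply_ne 2 u 1 hwu
        rw [this, mul_zero]
      · rfl
    have he : (eVec u : lp (fun _ : V => ℂ) 2) ∈ (T.shift lam).domain := by
      show Memℓp (T.lamMap lam (⇑(eVec u : lp (fun _ : V => ℂ) 2))) 2
      rw [hzero]
      exact zero_memℓp
    have hSval : T.shift lam ⟨eVec u, he⟩ = 0 := by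
      apply lp.ext
      rw [lp.coeFn_zero]
      exact hzero
    obtain ⟨hx', hle⟩ := hH (eVec u) he
    rw [hSval, norm_zero] at hle
    have hadj0 : (T.shift lam).adjoint ⟨eVec u, hx'⟩ = 0 :=
      norm_le_zero_iff.mp hle
    have hform := LinearPMap.adjoint_isFormalAdjoint hd ⟨eVec u, hx'⟩
    obtain ⟨f, hf, hfp⟩ := exists_mem_domain_ne T lam hd p
    have hinner := hform ⟨f, hf⟩
    rw [hadj0, inner_zero_left] at hinner
    have hval : (inner ℂ (eVec u : lp (fun _ : V => ℂ) 2) (T.shift lam ⟨f, hf⟩) : ℂ)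
        = lam u * f p := by
      have h1 : (inner ℂ (eVec u : lp (fun _ : V => ℂ) 2) (T.shift lam ⟨f, hf⟩) : ℂ)
          = inner ℂ (1 : ℂ) ((T.shift lam ⟨f, hf⟩ : lp (fun _ : V => ℂ) 2) u) :=
        lp.inner_single_left u 1 _
      rw [h1]
      have h2 : ((T.shift lam ⟨f, hf⟩ : lp (fun _ : V => ℂ) 2) : V → ℂ) u
          = T.lamMap lam (⇑f) u := rfl
      have h3 : T.lamMap lam (⇑f) u = lam u * f p := T.lamMap_apply_of_edge lam (⇑f) hp
      simp only [h2, h3]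
      simp [inner]
    rw [hval] at hinner
    exact mul_ne_zero (hnz u ⟨p, hp⟩) hfp hinner.symm
  · -- u is a root with no children: contradicts connectivity
    obtain ⟨v, hv⟩ := hV
    have hpath := T.connected u v
    rcases hpath.cases_head with heq | ⟨w, hw, _⟩
    · exact hroot (heq ▸ hv)
    · rcases hw with h | h
      · exact hno w h
      · exact hroot ⟨w, h⟩

open DirectedTree in
theorem chiN_countable {V : Type*} (T : DirectedTree V)
    (hchi : ∀ u : V, (T.chi u).Countable) : ∀ (n : ℕ) (u : V), (T.chiN n u).Countable := by
  intro n
  induction n with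
  | zero => intro u; exact Set.countable_singleton u
  | succ n ih =>
    intro u
    exact Set.Countable.biUnion (ih u) (fun w _ => hchi w)

open DirectedTree in
theorem cover_lemma {V : Type*} (T : DirectedTree V) (v₀ v : V) :
    ∃ n m : ℕ, v ∈ T.chiN m (T.par^[n] v₀) := by
  have hpath := T.connected v₀ v
  induction hpath with
  | refl => exact ⟨0, 0, rfl⟩
  | @tail b c hab hbc ih =>
    obtain ⟨n, m, hb⟩ := ih
    rcases hbc with h | h
    · -- edge b c
      refine ⟨n, m + 1, ?_⟩
      simp only [DirectedTree.chiN, Set.mem_iUnion]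
      exact ⟨_, hb, h⟩
    · -- edge c b : c is the parent of b
      cases m with
      | zero =>
        refine ⟨n + 1, 0, ?_⟩
        have hb' : b = T.par^[n] v₀ := hb
        have hc : c = T.par^[n+1] v₀ := by
          rw [Function.iterate_succ_apply', ← hb']
          exact (T.par_eq_of_edge h).symm
        rw [hc]
        rfl
      | succ m' =>
        refine ⟨n, m', ?_⟩
        simp only [DirectedTree.chiN, Set.mem_iUnion] at hb
        obtain ⟨x, hx, hxb⟩ := hb
        have : x = _ := T.parent_unique _ x _ hxb h
        rwa [← this]


/-- a hyponormal weighted shift with nonzero weights on a directed tree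
with `V° ≠ ∅` lives on a leafless tree; in particular it is injective and the vertex set
is countably infinite. -/
theorem stmt18 {V : Type*} (T : DirectedTree V) (hV : ∃ v : V, T.nonRoot v)
    (lam : V → ℂ) (hnz : ∀ v : V, T.nonRoot v → lam v ≠ 0)
    (hhyp : IsHyponormal (T.shift lam)) :
    T.Leafless
    ∧ (∀ x : (T.shift lam).domain, T.shift lam x = 0 → x = 0)
    ∧ Infinite V ∧ Countable V := by

  classical
  have hleaf : T.Leafless := leafless_of_hyp T hV lam hnz hhyp
  obtain ⟨v₀, _⟩ := hV
  refine ⟨hleaf, ?_, ?_, ?_⟩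
  · -- injectivity
    intro x hx
    have hfn : T.lamMap lam (⇑(x : lp (fun _ : V => ℂ) 2)) = 0 := by
      rw [lp.ext_iff, lp.coeFn_zero] at hx
      exact hx
    have hzero : ∀ w : V, (x : lp (fun _ : V => ℂ) 2) w = 0 := by
      intro w
      obtain ⟨v, hv⟩ := hleaf w
      have h1 : T.lamMap lam (⇑(x : lp (fun _ : V => ℂ) 2)) v = 0 := by
        have := congrFun hfn v; simpa using this
      rw [T.lamMap_apply_of_edge lam _ hv] at h1
      exact (mul_eq_zero.mp h1).resolve_left (hnz v ⟨w, hv⟩)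
    have hx0 : (x : lp (fun _ : V => ℂ) 2) = 0 := by
      apply lp.ext
      rw [lp.coeFn_zero]
      funext w
      simpa using hzero w
    exact Subtype.ext (by rw [hx0]; rfl)
  · -- Infinite
    have hg : ∀ u : V, T.edge u (hleaf u).choose := fun u => (hleaf u).choose_spec
    set g : V → V := fun u => (hleaf u).choose with hgdef
    have haux : ∀ (k : ℕ) (u : V), Relation.TransGen T.edge u (g^[k + 1] u) := by
      intro k
      induction k with
      | zero => intro u; exact Relation.TransGen.single (hg u)
      | succ k ih =>
        intro u
        rw [Function.iterate_succ_apply']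
        exact (ih u).tail (hg _)
    have hlt : ∀ i j : ℕ, i < j → g^[j] v₀ ≠ g^[i] v₀ := by
      intro i j hij heq
      obtain ⟨d, hd⟩ : ∃ d : ℕ, j = (d + 1) + i := ⟨j - i - 1, by omega⟩
      rw [hd, Function.iterate_add_apply] at heq
      have h2 := haux d (g^[i] v₀)
      rw [heq] at h2
      exact T.no_circuits _ h2
    have hinj : Function.Injective (fun n : ℕ => g^[n] v₀) := by
      intro i j h
      rcases lt_trichotomy i j with hlt' | heq | hlt'
      · exact absurd h.symm (hlt i j hlt')
      · exact heq
      · exact absurd h (hlt j i hlt')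
    exact Infinite.of_injective _ hinj
  · -- Countable
    have hchi : ∀ u : V, (T.chi u).Countable :=
      chi_countable_of_dense T lam hnz hhyp.1
    have hdes : ∀ u : V, (T.des u).Countable := fun u =>
      Set.countable_iUnion (fun n => chiN_countable T hchi n u)
    have hcover : (Set.univ : Set V) ⊆ ⋃ n : ℕ, T.des (T.par^[n] v₀) := by
      intro v _
      obtain ⟨n, m, hv⟩ := cover_lemma T v₀ v
      exact Set.mem_iUnion.mpr ⟨n, Set.mem_iUnion.mpr ⟨m, hv⟩⟩
    have : (Set.univ : Set V).Countable :=
      (Set.countable_iUnion (fun n => hdes (T.par^[n] v₀))).mono hcover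
    exact Set.countable_univ_iff.mp this

end
end
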